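/- The quasispecies distribution satisfies the recurrence: ρ*_0 = (σe^{-a} - 1)/(σ - 1), and for k ≥ 1, ρ*_k = (a^k/k!) ρ*_0 + (1/σ) Σ_{l=1}^{k} (a^{k-l}/(k-l)!) ρ*_l. -/

import Mathlib

open Real

lemma quasiS_summable {σ : ℝ} (hσ : 1 < σ) (k : ℕ) :
    Summable (fun i : ℕ => ((i + 1 : ℕ) : ℝ) ^ k / σ ^ (i + 1)) := by
  have hσ0 : (0:ℝ) < σ := lt_trans one_pos hσ
  have hr : ‖σ⁻¹‖ < 1 := by
    rw [Real.norm_eq_abs, abs_of_pos (inv_pos.mpr hσ0)]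
    exact inv_lt_one_of_one_lt₀ hσ
  have h1 := summable_pow_mul_geometric_of_norm_lt_one k hr
  have h2 := (summable_nat_add_iff 1).mpr h1
  refine h2.congr fun i => ?_
  push_cast
  rw [inv_pow, div_eq_mul_inv]

lemma quasiS_shift_summable {σ : ℝ} (hσ : 1 < σ) (k : ℕ) :
    Summable (fun i : ℕ => ((i + 1 : ℕ) : ℝ) ^ k / σ ^ i) := by
  have hσ0 : (0:ℝ) < σ := lt_trans one_pos hσ
  have hσne : σ ≠ 0 := ne_of_gt hσ0
  have := (quasiS_summable hσ k).mul_left σ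
  refine this.congr fun i => ?_
  field_simp
  ring

lemma quasiS_zero {σ : ℝ} (hσ : 1 < σ) :
    (∑' i : ℕ, ((i + 1 : ℕ) : ℝ) ^ 0 / σ ^ (i + 1)) = 1 / (σ - 1) := by
  have hσ0 : (0:ℝ) < σ := lt_trans one_pos hσ
  have h1 : (∑' i : ℕ, ((i + 1 : ℕ) : ℝ) ^ 0 / σ ^ (i + 1))
      = ∑' i : ℕ, σ⁻¹ * σ⁻¹ ^ i := by
    refine tsum_congr fun i => ?_
    rw [pow_zero, one_div, ← inv_pow, pow_succ']
  rw [h1, tsum_mul_left, tsum_geometric_of_lt_one (by positivity)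
    (inv_lt_one_of_one_lt₀ hσ)]
  have h2 : σ - 1 ≠ 0 := by linarith
  field_simp

lemma quasiS_key {σ : ℝ} (hσ : 1 < σ) (k : ℕ) :
    ∑ l ∈ Finset.range (k + 1), (k.choose l : ℝ) *
      (∑' i : ℕ, ((i + 1 : ℕ) : ℝ) ^ l / σ ^ (i + 1))
    = σ * (∑' i : ℕ, ((i + 1 : ℕ) : ℝ) ^ k / σ ^ (i + 1)) - 1 := by
  have hσ0 : (0:ℝ) < σ := lt_trans one_pos hσ
  have hσne : σ ≠ 0 := ne_of_gt hσ0
  calc ∑ l ∈ Finset.range (k + 1), (k.choose l : ℝ) *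
      (∑' i : ℕ, ((i + 1 : ℕ) : ℝ) ^ l / σ ^ (i + 1))
      = ∑ l ∈ Finset.range (k + 1), ∑' i : ℕ,
          (k.choose l : ℝ) * (((i + 1 : ℕ) : ℝ) ^ l / σ ^ (i + 1)) := by
        exact Finset.sum_congr rfl fun l _ => (tsum_mul_left).symm
    _ = ∑' i : ℕ, ∑ l ∈ Finset.range (k + 1),
          (k.choose l : ℝ) * (((i + 1 : ℕ) : ℝ) ^ l / σ ^ (i + 1)) := by
        refine (Summable.tsum_finsetSum fun l _ => ?_).symm
        exact (quasiS_summable hσ l).mul_left _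
    _ = ∑' i : ℕ, ((i + 2 : ℕ) : ℝ) ^ k / σ ^ (i + 1) := by
        refine tsum_congr fun i => ?_
        have h2 : ((i + 2 : ℕ) : ℝ) = ((i + 1 : ℕ) : ℝ) + 1 := by push_cast; ring
        rw [h2, add_pow, Finset.sum_div]
        refine Finset.sum_congr rfl fun l hl => ?_
        rw [one_pow]
        ring
    _ = σ * (∑' i : ℕ, ((i + 1 : ℕ) : ℝ) ^ k / σ ^ (i + 1)) - 1 := by
        have hg := quasiS_shift_summable hσ k
        have h0 := Summable.tsum_eq_zero_add hg
        have hmul : σ * (∑' i : ℕ, ((i + 1 : ℕ) : ℝ) ^ k / σ ^ (i + 1))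
            = ∑' i : ℕ, ((i + 1 : ℕ) : ℝ) ^ k / σ ^ i := by
          rw [← tsum_mul_left]
          refine tsum_congr fun i => ?_
          field_simp
          ring
        rw [hmul, h0]
        have h3 : (∑' i : ℕ, ((i + 1 + 1 : ℕ) : ℝ) ^ k / σ ^ (i + 1))
            = ∑' i : ℕ, ((i + 2 : ℕ) : ℝ) ^ k / σ ^ (i + 1) := by
          refine tsum_congr fun i => ?_
          push_cast
          ring_nf
        simp only [Nat.cast_one, pow_zero] at h0 ⊢
        rw [← h3]
        push_cast
        ring

/-- The quasispecies distribution: `ρ*_k = (σ e^{-a} - 1) (a^k/k!) ∑_{i≥1} i^k/σ^i`. -/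
noncomputable def quasiRho (σ a : ℝ) (k : ℕ) : ℝ :=
  (σ * Real.exp (-a) - 1) * (a ^ k / (Nat.factorial k : ℝ)) *
    ∑' i : ℕ, ((i + 1 : ℕ) : ℝ) ^ k / σ ^ (i + 1)

/-- The quasispecies distribution satisfies the recurrence
`ρ*_0 = (σe^{-a} - 1)/(σ - 1)` and, for `k ≥ 1`,
`ρ*_k = (a^k/k!) ρ*_0 + (1/σ) ∑_{l=1}^{k} (a^{k-l}/(k-l)!) ρ*_l`. -/
theorem quasiRho_recurrence (σ a : ℝ) (hσ : 1 < σ) (ha : 0 < a)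
    (h : 1 < σ * Real.exp (-a)) :
    quasiRho σ a 0 = (σ * Real.exp (-a) - 1) / (σ - 1) ∧
    ∀ k : ℕ, 1 ≤ k →
      quasiRho σ a k =
        (a ^ k / (Nat.factorial k : ℝ)) * quasiRho σ a 0 +
          (1 / σ) * ∑ l ∈ Finset.Icc 1 k,
            (a ^ (k - l) / (Nat.factorial (k - l) : ℝ)) * quasiRho σ a l := by
  have hσ0 : (0:ℝ) < σ := lt_trans one_pos hσ
  have hσne : σ ≠ 0 := ne_of_gt hσ0
  have hσ1 : σ - 1 ≠ 0 := by linarith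
  set C : ℝ := σ * Real.exp (-a) - 1 with hC
  have h0 : quasiRho σ a 0 = C / (σ - 1) := by
    rw [quasiRho, quasiS_zero hσ, ← hC]
    norm_num [div_eq_mul_inv]
  refine ⟨h0, fun k hk => ?_⟩
  have hterm : ∀ l ∈ Finset.Icc 1 k,
      (a ^ (k - l) / (Nat.factorial (k - l) : ℝ)) * quasiRho σ a l
      = (C * (a ^ k / (Nat.factorial k : ℝ))) *
          ((k.choose l : ℝ) * ∑' i : ℕ, ((i + 1 : ℕ) : ℝ) ^ l / σ ^ (i + 1)) := by
    intro l hl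
    have hlk : l ≤ k := (Finset.mem_Icc.mp hl).2
    have hpow : a ^ (k - l) * a ^ l = a ^ k := by
      rw [← pow_add, Nat.sub_add_cancel hlk]
    have hfac := Nat.choose_mul_factorial_mul_factorial hlk
    have hfacR : ((k.choose l : ℕ) : ℝ) * ((Nat.factorial l : ℕ) : ℝ) *
        ((Nat.factorial (k - l) : ℕ) : ℝ) = ((Nat.factorial k : ℕ) : ℝ) := by
      exact_mod_cast hfac
    have hne1 : ((Nat.factorial l : ℕ) : ℝ) ≠ 0 :=
      Nat.cast_ne_zero.mpr (Nat.factorial_ne_zero l)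
    have hne2 : ((Nat.factorial (k - l) : ℕ) : ℝ) ≠ 0 :=
      Nat.cast_ne_zero.mpr (Nat.factorial_ne_zero (k - l))
    have hne3 : ((Nat.factorial k : ℕ) : ℝ) ≠ 0 :=
      Nat.cast_ne_zero.mpr (Nat.factorial_ne_zero k)
    rw [quasiRho]
    field_simp
    rw [← hfacR, ← hpow]
    ring
  rw [Finset.sum_congr rfl hterm, ← Finset.mul_sum]
  have hrange : ∑ l ∈ Finset.range (k + 1), (k.choose l : ℝ) *
        (∑' i : ℕ, ((i + 1 : ℕ) : ℝ) ^ l / σ ^ (i + 1))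
      = (k.choose 0 : ℝ) * (∑' i : ℕ, ((i + 1 : ℕ) : ℝ) ^ 0 / σ ^ (i + 1)) +
        ∑ l ∈ Finset.Icc 1 k, (k.choose l : ℝ) *
          (∑' i : ℕ, ((i + 1 : ℕ) : ℝ) ^ l / σ ^ (i + 1)) := by
    rw [Finset.range_eq_Ico, Finset.sum_eq_sum_Ico_succ_bot (Nat.succ_pos k)]
    rw [Nat.succ_eq_add_one, Finset.Ico_add_one_right_eq_Icc, zero_add]
  have hicc : ∑ l ∈ Finset.Icc 1 k, (k.choose l : ℝ) *
        (∑' i : ℕ, ((i + 1 : ℕ) : ℝ) ^ l / σ ^ (i + 1))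
      = (σ * (∑' i : ℕ, ((i + 1 : ℕ) : ℝ) ^ k / σ ^ (i + 1)) - 1) - 1 / (σ - 1) := by
    have := quasiS_key hσ k
    rw [hrange] at this
    rw [quasiS_zero hσ] at this
    simp only [Nat.choose_zero_right, Nat.cast_one, one_mul] at this
    linarith
  rw [hicc, h0, quasiRho]
  field_simp
  ring
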